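/- Let k be a field, α ∈ Q⁺ with ht(α) = n, and let λ, μ ∈ KP(α) be Kostant partitions with λ ≱ μ in the bilexicographic order. If w ∈ S_n satisfies 1_λ τ_w 1_μ ≠ 0 in H_{α,k}, then there exists 1 ≤ r < n such that r ∼_λ r+1 but w^{-1}(r) ≁_μ w^{-1}(r+1). -/

import Mathlib

open scoped BigOperators

namespace KLR

/-- A Cartan datum of finite type: a finite index set `I`, a Cartan matrix `c` of finite type
(encoded by positive definiteness of the symmetrized matrix), symmetrizers `d`, and a choice
of signs `eps` with `eps i j * eps j i = -1` whenever `c i j < 0`. -/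
structure CartanDatum (I : Type) [Fintype I] [DecidableEq I] where
  c : I → I → ℤ
  d : I → ℤ
  eps : I → I → ℤ
  c_diag : ∀ i, c i i = 2
  c_offdiag : ∀ i j, i ≠ j → c i j ≤ 0
  c_zero_iff : ∀ i j, c i j = 0 → c j i = 0
  d_pos : ∀ i, 0 < d i
  symm : ∀ i j, d i * c i j = d j * c j i
  finiteType : ∀ v : I → ℚ, v ≠ 0 → 0 < ∑ i, ∑ j, v i * ((d i * c i j : ℤ) : ℚ) * v j
  eps_sign : ∀ i j, c i j < 0 → eps i j = 1 ∨ eps i j = -1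
  eps_skew : ∀ i j, c i j < 0 → eps i j * eps j i = -1

variable {I : Type} [Fintype I] [DecidableEq I]

/-- The height of `α ∈ Q⁺`, where `α : I → ℕ` records the coefficients on the simple roots. -/
def ht (α : I → ℕ) : ℕ := ∑ i, α i

/-- Membership in `I^α`: the word `f` has exactly `α i` letters equal to `i`, for each `i`. -/
def InIalpha (α : I → ℕ) {n : ℕ} (f : Fin n → I) : Prop :=
  ∀ i : I, (Finset.univ.filter fun r => f r = i).card = α i

instance (α : I → ℕ) {n : ℕ} (f : Fin n → I) : Decidable (InIalpha α f) := by
  unfold InIalpha; infer_instance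

/-- Generators of the KLR algebra: idempotents `e f`, polynomial generators `x r`,
and "intertwiners" `t r` (the generator `t r` is set to `0` unless `r + 1 < n`). -/
inductive Gen (I : Type) (n : ℕ) : Type
  | e : (Fin n → I) → Gen I n
  | x : Fin n → Gen I n
  | t : Fin n → Gen I n

variable (k : Type) [CommRing k]

/-- `e f` as an element of the free algebra. -/
def Ee {n : ℕ} (f : Fin n → I) : FreeAlgebra k (Gen I n) := FreeAlgebra.ι k (Gen.e f)

/-- `x r` as an element of the free algebra. -/
def Xx {n : ℕ} (r : Fin n) : FreeAlgebra k (Gen I n) := FreeAlgebra.ι k (Gen.x r)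

/-- `t r` as an element of the free algebra. -/
def Tt {n : ℕ} (r : Fin n) : FreeAlgebra k (Gen I n) := FreeAlgebra.ι k (Gen.t r)

/-- `r + 1` as an element of `Fin n`. -/
def nxt {n : ℕ} (r : Fin n) (h : r.val + 1 < n) : Fin n := ⟨r.val + 1, h⟩

/-- The defining relations of the KLR algebra `H_α` over `k`.
(`Rel a b` means that `a = b` is imposed in the quotient.) -/
inductive Rel (D : CartanDatum I) (α : I → ℕ) (n : ℕ) :
    FreeAlgebra k (Gen I n) → FreeAlgebra k (Gen I n) → Prop
  | xx (r s : Fin n) : Rel D α n (Xx k r * Xx k s) (Xx k s * Xx k r)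
  | ee (f g : Fin n → I) :
      Rel D α n (Ee k f * Ee k g) (if f = g then Ee k f else 0)
  | esum : Rel D α n (∑ f : Fin n → I, Ee k f) 1
  | ekill (f : Fin n → I) (h : ¬ InIalpha α f) : Rel D α n (Ee k f) 0
  | xe (r : Fin n) (f : Fin n → I) : Rel D α n (Xx k r * Ee k f) (Ee k f * Xx k r)
  | te (r : Fin n) (h : r.val + 1 < n) (f : Fin n → I) :
      Rel D α n (Tt k r * Ee k f) (Ee k (f ∘ Equiv.swap r (nxt r h)) * Tt k r)
  | tkill (r : Fin n) (h : ¬ r.val + 1 < n) : Rel D α n (Tt k r) 0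
  | xte (s r : Fin n) (h : r.val + 1 < n) (f : Fin n → I) :
      Rel D α n (Xx k s * Tt k r * Ee k f - Tt k r * Xx k (Equiv.swap r (nxt r h) s) * Ee k f)
        (if f r = f (nxt r h) then
          ((if s = nxt r h then (1 : FreeAlgebra k (Gen I n)) else 0) -
            (if s = r then 1 else 0)) * Ee k f
         else 0)
  | tte (r : Fin n) (h : r.val + 1 < n) (f : Fin n → I) :
      Rel D α n (Tt k r * Tt k r * Ee k f)
        (if f r = f (nxt r h) then 0
         else if D.c (f r) (f (nxt r h)) < 0 then
           D.eps (f r) (f (nxt r h)) •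
             ((Xx k r ^ (-(D.c (f r) (f (nxt r h)))).toNat -
               Xx k (nxt r h) ^ (-(D.c (f (nxt r h)) (f r))).toNat) * Ee k f)
         else Ee k f)
  | ttfar (r s : Fin n) (h : r.val + 1 < s.val ∨ s.val + 1 < r.val) :
      Rel D α n (Tt k r * Tt k s) (Tt k s * Tt k r)
  | braid (r : Fin n) (h : r.val + 2 < n) (f : Fin n → I) :
      Rel D α n
        (Tt k (nxt r (by omega)) * Tt k r * Tt k (nxt r (by omega)) * Ee k f -
          Tt k r * Tt k (nxt r (by omega)) * Tt k r * Ee k f)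
        (if D.c (f r) (f (nxt r (by omega))) < 0 ∧ f r = f ⟨r.val + 2, h⟩ then
          D.eps (f r) (f (nxt r (by omega))) •
            ((∑ a ∈ Finset.range ((-1 - D.c (f r) (f (nxt r (by omega)))).toNat + 1),
              Xx k r ^ a *
                Xx k (⟨r.val + 2, h⟩ : Fin n) ^
                  ((-1 - D.c (f r) (f (nxt r (by omega)))).toNat - a)) * Ee k f)
         else 0)

/-- The KLR algebra `H_α` over `k`, defined by generators and relations. -/
abbrev H (D : CartanDatum I) (α : I → ℕ) : Type :=
  RingQuot (Rel k D α (ht α))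

variable (D : CartanDatum I) (α : I → ℕ)

/-- The idempotent `1_f ∈ H_α` for `f ∈ I^α`. -/
noncomputable def E (f : Fin (ht α) → I) : H k D α :=
  RingQuot.mkAlgHom k (Rel k D α (ht α)) (Ee k f)

/-- The generator `x_r ∈ H_α`. -/
noncomputable def X (r : Fin (ht α)) : H k D α :=
  RingQuot.mkAlgHom k (Rel k D α (ht α)) (Xx k r)

/-- The generator `τ_r ∈ H_α`. -/
noncomputable def T (r : Fin (ht α)) : H k D α :=
  RingQuot.mkAlgHom k (Rel k D α (ht α)) (Tt k r)

/-- The monomial `x_1^{a 1} ⋯ x_n^{a n} ∈ H_α`. -/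
noncomputable def XA (a : Fin (ht α) → ℕ) : H k D α :=
  (List.ofFn fun r => X k D α r ^ a r).prod

/-- The product `τ_{r_1} ⋯ τ_{r_l} ∈ H_α` associated to a word `L = [r_1, …, r_l]`. -/
noncomputable def tauWord (L : List (Fin (ht α))) : H k D α :=
  (L.map (T k D α)).prod

/-- The permutation `s_{r_1} ⋯ s_{r_l}` associated to a word. -/
def wordPerm {n : ℕ} (L : List (Fin n)) : Equiv.Perm (Fin n) :=
  (L.map fun r => if h : r.val + 1 < n then Equiv.swap r (nxt r h) else 1).prod

/-- A word is valid if all its letters index simple transpositions. -/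
def ValidWord {n : ℕ} (L : List (Fin n)) : Prop := ∀ r ∈ L, r.val + 1 < n

/-- `L` is a reduced expression for the permutation `w`. -/
def IsReducedWordFor {n : ℕ} (L : List (Fin n)) (w : Equiv.Perm (Fin n)) : Prop :=
  ValidWord L ∧ wordPerm L = w ∧
    ∀ L' : List (Fin n), ValidWord L' → wordPerm L' = w → L.length ≤ L'.length

end KLR
namespace KLR

variable {I : Type} [Fintype I] [DecidableEq I]

/-- The simple root `α_i`, as an integer vector in the root lattice. -/
def simple (i : I) : I → ℤ := fun j => if j = i then 1 else 0

/-- The simple reflection `s_i` acting on the root lattice: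
`s_i(v) = v - (Σ_t c_{i,t} v_t) α_i`. -/
def srefl (D : CartanDatum I) (i : I) (v : I → ℤ) : I → ℤ :=
  fun j => v j - (if j = i then ∑ t, D.c i t * v t else 0)

/-- `v` is a root of the (finite type) root system with Cartan matrix `C`:
it lies in the Weyl group orbit of a simple root. -/
def IsRoot (D : CartanDatum I) (v : I → ℤ) : Prop :=
  ∃ (L : List I) (i : I), v = L.foldr (srefl D) (simple i)

/-- `v` is a positive root: a root all of whose coordinates are nonnegative. -/
def IsPosRoot (D : CartanDatum I) (v : I → ℤ) : Prop :=
  IsRoot D v ∧ ∀ j, 0 ≤ v j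

/-- `le` is a convex order on the set `Φ⁺` of positive roots: a total order such that
whenever `γ`, `β` and `γ + β` are all positive roots, `γ ⪯ β` implies
`γ ⪯ γ + β ⪯ β`. -/
structure IsConvexOrder (D : CartanDatum I) (le : (I → ℤ) → (I → ℤ) → Prop) : Prop where
  refl : ∀ v, IsPosRoot D v → le v v
  trans : ∀ u v w, IsPosRoot D u → IsPosRoot D v → IsPosRoot D w →
      le u v → le v w → le u w
  antisymm : ∀ u v, IsPosRoot D u → IsPosRoot D v → le u v → le v u → u = v
  total : ∀ u v, IsPosRoot D u → IsPosRoot D v → le u v ∨ le v u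
  convex : ∀ γ β, IsPosRoot D γ → IsPosRoot D β → IsPosRoot D (γ + β) → le γ β →
      le γ (γ + β) ∧ le (γ + β) β

/-- `L` is a Kostant partition of `α`: a weakly decreasing (for the convex order `le`)
list of positive roots summing to `α`. -/
def IsKP (D : CartanDatum I) (le : (I → ℤ) → (I → ℤ) → Prop) (α : I → ℕ)
    (L : List (I → ℤ)) : Prop :=
  (∀ v ∈ L, IsPosRoot D v) ∧ List.Pairwise (fun a b => le b a) L ∧
    L.sum = fun i => (α i : ℤ)

/-- `L` is lexicographically smaller than `M` for the strict order `lt`: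
they agree up to position `t`, where the entry of `L` is `lt`-smaller. -/
def LexLt {V : Type} (lt : V → V → Prop) (L M : List V) : Prop :=
  ∃ (t : ℕ) (h1 : t < L.length) (h2 : t < M.length),
    L.take t = M.take t ∧ lt (L.get ⟨t, h1⟩) (M.get ⟨t, h2⟩)

/-- The strict bilexicographic order on Kostant partitions: `L < M` iff `L` is
lexicographically smaller than `M` and the reversed list `L.reverse` is lexicographically
bigger than `M.reverse`. -/
def BilexLt {V : Type} (le : V → V → Prop) (L M : List V) : Prop :=
  LexLt (fun a b => le a b ∧ a ≠ b) L M ∧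
    LexLt (fun a b => le b a ∧ a ≠ b) L.reverse M.reverse

end KLR

namespace KLR

open scoped Classical

variable {I : Type} [Fintype I] [DecidableEq I]

/-- The height of a positive root, recorded as an integer vector. -/
def htroot (v : I → ℤ) : ℕ := (∑ i, v i).toNat

/-- `offset L t` is the position at which the `t`-th block of a Kostant partition `L` starts,
namely `ht(λ_1) + ⋯ + ht(λ_t)`. -/
def offset (L : List (I → ℤ)) (t : ℕ) : ℕ := ((L.take t).map htroot).sum

/-- Positions `r` and `s` (0-based) are `λ`-equivalent: they lie in the same block of the
parabolic subgroup `S_λ ≤ S_n`. -/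
def sameBlock (L : List (I → ℤ)) (r s : ℕ) : Prop :=
  ∃ t, offset L t ≤ r ∧ r < offset L (t + 1) ∧ offset L t ≤ s ∧ s < offset L (t + 1)

/-- `f ∈ I^{λ_1,…,λ_l}`: the word `f` is a concatenation of words `f^t ∈ I^{λ_t}`. -/
def blockMem (L : List (I → ℤ)) {n : ℕ} (f : Fin n → I) : Prop :=
  ∀ (t : ℕ) (h : t < L.length), ∀ i : I,
    ((Finset.univ.filter fun r : Fin n =>
        offset L t ≤ r.val ∧ r.val < offset L (t + 1) ∧ f r = i).card : ℤ) = L.get ⟨t, h⟩ i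

variable (k : Type) [CommRing k]

/-- The idempotent `1_λ = Σ_{f ∈ I^{λ_1,…,λ_l}} 1_f ∈ H_α` attached to a Kostant
partition `λ`. -/
noncomputable def oneKP (D : CartanDatum I) (α : I → ℕ) (L : List (I → ℤ)) : H k D α :=
  ∑ f : Fin (ht α) → I, if blockMem L f then E k D α f else 0

end KLR

namespace KLR

variable {I : Type} [Fintype I] [DecidableEq I]

/-! ### The symmetric bilinear form -/

def Bf (D : CartanDatum I) (u v : I → ℤ) : ℤ := ∑ i, ∑ j, D.d i * D.c i j * u i * v j

variable (D : CartanDatum I)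

lemma Bf_symm (u v : I → ℤ) : Bf D u v = Bf D v u := by
  rw [Bf, Bf, Finset.sum_comm]
  refine Finset.sum_congr rfl fun j _ => Finset.sum_congr rfl fun i _ => ?_
  linear_combination (u i * v j) * D.symm i j

lemma Bf_add_left (u v w : I → ℤ) : Bf D (u + v) w = Bf D u w + Bf D v w := by
  rw [Bf, Bf, Bf, ← Finset.sum_add_distrib]
  refine Finset.sum_congr rfl fun i _ => ?_
  rw [← Finset.sum_add_distrib]
  exact Finset.sum_congr rfl fun j _ => by simp [Pi.add_apply]; ring

lemma Bf_add_right (u v w : I → ℤ) : Bf D u (v + w) = Bf D u v + Bf D u w := by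
  rw [Bf_symm, Bf_add_left, Bf_symm D v u, Bf_symm D w u]

lemma Bf_smul_left (z : ℤ) (u v : I → ℤ) : Bf D (z • u) v = z * Bf D u v := by
  rw [Bf, Bf, Finset.mul_sum]
  refine Finset.sum_congr rfl fun i _ => ?_
  rw [Finset.mul_sum]
  exact Finset.sum_congr rfl fun j _ => by simp [Pi.smul_apply, smul_eq_mul]; ring

lemma Bf_smul_right (z : ℤ) (u v : I → ℤ) : Bf D u (z • v) = z * Bf D u v := by
  rw [Bf_symm, Bf_smul_left, Bf_symm D v u]

lemma Bf_zero_left (v : I → ℤ) : Bf D 0 v = 0 := by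
  simp [Bf]

lemma Bf_sub_left (u v w : I → ℤ) : Bf D (u - v) w = Bf D u w - Bf D v w := by
  have h := Bf_add_left D (u - v) v w
  rw [sub_add_cancel] at h
  omega

lemma Bf_sub_right (u v w : I → ℤ) : Bf D u (v - w) = Bf D u v - Bf D u w := by
  rw [Bf_symm, Bf_sub_left, Bf_symm D v u, Bf_symm D w u]

lemma Bf_pos (v : I → ℤ) (hv : v ≠ 0) : 0 < Bf D v v := by
  have hv' : (fun i => (v i : ℚ)) ≠ 0 := by
    intro h
    apply hv
    funext i
    have := congrFun h i
    simpa using this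
  have h := D.finiteType _ hv'
  have hcast : ((Bf D v v : ℤ) : ℚ) = ∑ i, ∑ j, (v i : ℚ) * ((D.d i * D.c i j : ℤ) : ℚ) * (v j : ℚ) := by
    rw [Bf]
    push_cast
    refine Finset.sum_congr rfl fun i _ => Finset.sum_congr rfl fun j _ => by ring
  have : (0 : ℚ) < ((Bf D v v : ℤ) : ℚ) := by rw [hcast]; exact h
  exact_mod_cast this

lemma Bf_cs (u v : I → ℤ) (hv : v ≠ 0) :
    Bf D u v ^ 2 ≤ Bf D u u * Bf D v v ∧
      (Bf D u v ^ 2 = Bf D u u * Bf D v v → Bf D v v • u = Bf D u v • v) := by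
  set x : I → ℤ := Bf D v v • u - Bf D u v • v with hx
  have key : Bf D x x = Bf D v v * (Bf D u u * Bf D v v - Bf D u v ^ 2) := by
    rw [hx]
    simp only [Bf_sub_left, Bf_sub_right, Bf_smul_left, Bf_smul_right]
    rw [Bf_symm D v u]
    ring
  have hvv : 0 < Bf D v v := Bf_pos D v hv
  have hxx : 0 ≤ Bf D x x := by
    by_cases hx0 : x = 0
    · rw [hx0, Bf_zero_left]
    · exact le_of_lt (Bf_pos D x hx0)
  constructor
  · nlinarith [hxx, key, hvv]
  · intro heq
    have hx0 : Bf D x x = 0 := by rw [key, heq]; ring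
    have : x = 0 := by
      by_contra hne
      exact absurd hx0 (ne_of_gt (Bf_pos D x hne))
    have := sub_eq_zero.mp (hx.symm ▸ this)
    exact this

/-! ### Simple roots and reflections -/

lemma Bf_simple_right (v : I → ℤ) (i : I) :
    Bf D v (simple i) = D.d i * ∑ t, D.c i t * v t := by
  rw [Bf]
  have h1 : ∀ a, ∑ b, D.d a * D.c a b * v a * simple i b = D.d a * D.c a i * v a := by
    intro a
    rw [Finset.sum_eq_single i]
    · simp [simple]
    · intro b _ hb; simp [simple, hb]
    · intro h; exact absurd (Finset.mem_univ i) h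
  rw [Finset.sum_congr rfl fun a _ => h1 a, Finset.mul_sum]
  refine Finset.sum_congr rfl fun a _ => ?_
  linear_combination v a * D.symm a i

lemma Bf_simple_left (v : I → ℤ) (i : I) :
    Bf D (simple i) v = D.d i * ∑ t, D.c i t * v t := by
  rw [Bf_symm, Bf_simple_right]

lemma Bf_simple_simple (i : I) : Bf D (simple i) (simple i) = 2 * D.d i := by
  rw [Bf_simple_right]
  rw [Finset.sum_eq_single i]
  · simp [simple, D.c_diag]; ring
  · intro b _ hb
    simp [simple, hb]
  · intro h
    exact absurd (Finset.mem_univ i) h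

lemma srefl_eq (i : I) (v : I → ℤ) :
    srefl D i v = v - (∑ t, D.c i t * v t) • simple i := by
  funext j
  simp only [srefl, Pi.sub_apply, Pi.smul_apply, simple, smul_eq_mul]
  by_cases h : j = i <;> simp [h]

lemma srefl_isometry (i : I) (u v : I → ℤ) :
    Bf D (srefl D i u) (srefl D i v) = Bf D u v := by
  rw [srefl_eq, srefl_eq]
  simp only [Bf_sub_left, Bf_sub_right, Bf_smul_left, Bf_smul_right]
  rw [Bf_simple_right, Bf_simple_left, Bf_simple_simple]
  ring

lemma srefl_sub (i : I) (u v : I → ℤ) :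
    srefl D i (u - v) = srefl D i u - srefl D i v := by
  funext j
  simp only [srefl, Pi.sub_apply, mul_sub, Finset.sum_sub_distrib]
  by_cases h : j = i <;> simp [h] <;> ring

lemma srefl_smul (i : I) (z : ℤ) (v : I → ℤ) :
    srefl D i (z • v) = z • srefl D i v := by
  funext j
  simp only [srefl, Pi.smul_apply, smul_eq_mul]
  have hsum : ∑ t, D.c i t * (z * v t) = z * ∑ t, D.c i t * v t := by
    rw [Finset.mul_sum]
    exact Finset.sum_congr rfl fun t _ => by ring
  by_cases h : j = i
  · simp [h, hsum, mul_sub]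
  · simp [h]

lemma srefl_invol (i : I) (v : I → ℤ) : srefl D i (srefl D i v) = v := by
  have hS : ∑ t, D.c i t * (srefl D i v) t = -(∑ t, D.c i t * v t) := by
    simp only [srefl, mul_sub, Finset.sum_sub_distrib, mul_ite, mul_zero]
    rw [Finset.sum_ite_eq' Finset.univ i (fun t => D.c i t * ∑ t, D.c i t * v t)]
    simp [D.c_diag]
    ring
  funext j
  simp only [srefl] at hS ⊢
  by_cases h : j = i <;> simp [h, hS]

/-! ### Roots -/

lemma isRoot_srefl (i : I) (v : I → ℤ) (hv : IsRoot D v) : IsRoot D (srefl D i v) := by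
  obtain ⟨L, i0, rfl⟩ := hv
  exact ⟨i :: L, i0, rfl⟩

lemma isRoot_foldr (L : List I) (v : I → ℤ) (hv : IsRoot D v) :
    IsRoot D (L.foldr (srefl D) v) := by
  induction L with
  | nil => exact hv
  | cons a L ih => exact isRoot_srefl D a _ ih

lemma isRoot_foldl (L : List I) (v : I → ℤ) (hv : IsRoot D v) :
    IsRoot D (L.foldl (fun acc j => srefl D j acc) v) := by
  induction L generalizing v with
  | nil => exact hv
  | cons a L ih => exact ih _ (isRoot_srefl D a _ hv)

lemma foldr_foldl_inv (L : List I) (v : I → ℤ) :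
    L.foldr (srefl D) (L.foldl (fun acc j => srefl D j acc) v) = v := by
  induction L generalizing v with
  | nil => rfl
  | cons a L ih =>
    simp only [List.foldr_cons, List.foldl_cons]
    rw [ih (srefl D a v), srefl_invol]

lemma Bf_foldr (L : List I) (u v : I → ℤ) :
    Bf D (L.foldr (srefl D) u) (L.foldr (srefl D) v) = Bf D u v := by
  induction L with
  | nil => rfl
  | cons a L ih => simp only [List.foldr_cons]; rw [srefl_isometry, ih]

lemma foldr_sub (L : List I) (u v : I → ℤ) :
    L.foldr (srefl D) (u - v) = L.foldr (srefl D) u - L.foldr (srefl D) v := by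
  induction L with
  | nil => rfl
  | cons a L ih => simp only [List.foldr_cons]; rw [ih, srefl_sub]

lemma foldr_smul (L : List I) (z : ℤ) (v : I → ℤ) :
    L.foldr (srefl D) (z • v) = z • L.foldr (srefl D) v := by
  induction L with
  | nil => rfl
  | cons a L ih => simp only [List.foldr_cons]; rw [ih, srefl_smul]

lemma simple_ne_zero (i : I) : simple i ≠ (0 : I → ℤ) := by
  intro h
  have := congrFun h i
  simp [simple] at this

lemma isRoot_Bf_pos (v : I → ℤ) (hv : IsRoot D v) : 0 < Bf D v v := by
  obtain ⟨L, i, rfl⟩ := hv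
  rw [Bf_foldr, Bf_simple_simple]
  have := D.d_pos i
  omega

lemma isRoot_ne_zero (v : I → ℤ) (hv : IsRoot D v) : v ≠ 0 := by
  intro h
  have := isRoot_Bf_pos D v hv
  rw [h, Bf_zero_left] at this
  omega

lemma isRoot_neg (v : I → ℤ) (hv : IsRoot D v) : IsRoot D (-v) := by
  obtain ⟨L, i, rfl⟩ := hv
  refine ⟨L ++ [i], i, ?_⟩
  rw [List.foldr_append]
  have h1 : List.foldr (srefl D) (simple i) [i] = -simple i := by
    simp only [List.foldr_cons, List.foldr_nil]
    have := srefl_eq D i (simple i)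
    rw [this]
    have hsum : ∑ t, D.c i t * simple i t = 2 := by
      rw [Finset.sum_eq_single i]
      · simp [simple, D.c_diag]
      · intro b _ hb; simp [simple, hb]
      · intro h; exact absurd (Finset.mem_univ i) h
    rw [hsum]
    funext j
    simp [simple]
    by_cases h : j = i <;> simp [h]
  rw [h1]
  have : -simple i = (0 : I → ℤ) - simple i := by simp
  rw [this, foldr_sub]
  have hz : List.foldr (srefl D) (0 : I → ℤ) L = 0 := by
    have h0 : (0 : I → ℤ) = (0 : ℤ) • (0 : I → ℤ) := by simp
    rw [h0, foldr_smul]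
    simp
  rw [hz]
  simp

/-- Reflection of any vector in a root: there is an integer `p` with
`2 B(β,γ) = p B(γ,γ)` such that `β - p γ` is again a root whenever `β` is. -/
lemma refl_root (γ β : I → ℤ) (hγ : IsRoot D γ) (hβ : IsRoot D β) :
    ∃ p : ℤ, 2 * Bf D β γ = p * Bf D γ γ ∧ IsRoot D (β - p • γ) := by
  obtain ⟨L, i, rfl⟩ := hγ
  set γ := L.foldr (srefl D) (simple i) with hγdef
  set β' := L.foldl (fun acc j => srefl D j acc) β with hβ'
  set p := ∑ t, D.c i t * β' t with hp
  refine ⟨p, ?_, ?_⟩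
  · have h1 : Bf D β γ = Bf D β' (simple i) := by
      rw [← Bf_foldr D L β' (simple i), foldr_foldl_inv]
    have h2 : Bf D γ γ = 2 * D.d i := by
      rw [hγdef, Bf_foldr, Bf_simple_simple]
    rw [h1, h2, Bf_symm, Bf_simple_left]
    ring
  · have hroot : IsRoot D (L.foldr (srefl D) (srefl D i β')) := by
      apply isRoot_foldr
      apply isRoot_srefl
      exact isRoot_foldl D L β hβ
    have heq : L.foldr (srefl D) (srefl D i β') = β - p • γ := by
      rw [srefl_eq, ← hp, foldr_sub, foldr_smul, foldr_foldl_inv]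
    rwa [heq] at hroot

/-- Key root-string lemma: if `β ≠ γ` are roots with `B(β,γ) > 0` then `β - γ` is a root. -/
lemma isRoot_sub (β γ : I → ℤ) (hβ : IsRoot D β) (hγ : IsRoot D γ)
    (hne : β ≠ γ) (hpos : 0 < Bf D β γ) : IsRoot D (β - γ) := by
  obtain ⟨p, hp1, hp2⟩ := refl_root D γ β hγ hβ
  obtain ⟨q, hq1, hq2⟩ := refl_root D β γ hβ hγ
  have hγγ : 0 < Bf D γ γ := isRoot_Bf_pos D γ hγ
  have hββ : 0 < Bf D β β := isRoot_Bf_pos D β hβ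
  have hγβ : Bf D γ β = Bf D β γ := Bf_symm D γ β
  have hp_pos : 0 < p := by nlinarith
  have hq_pos : 0 < q := by nlinarith
  by_cases hp1' : p = 1
  · rw [hp1', one_smul] at hp2
    exact hp2
  by_cases hq1' : q = 1
  · rw [hq1', one_smul] at hq2
    have := isRoot_neg D _ hq2
    rwa [neg_sub] at this
  -- p, q ≥ 2
  have hp2' : 2 ≤ p := by omega
  have hq2' : 2 ≤ q := by omega
  have hcs := Bf_cs D β γ (isRoot_ne_zero D γ hγ)
  have hprod : p * q * (Bf D γ γ * Bf D β β) = 4 * Bf D β γ ^ 2 := by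
    rw [hγβ] at hq1
    nlinarith [hp1, hq1]
  have hle : Bf D β γ ^ 2 ≤ Bf D β β * Bf D γ γ := hcs.1
  have hpq4 : p * q = 4 := by nlinarith
  have hp2e : p = 2 := by nlinarith
  have hq2e : q = 2 := by nlinarith
  have heq : Bf D β γ ^ 2 = Bf D β β * Bf D γ γ := by nlinarith
  have hx := hcs.2 heq
  -- B(γ,γ) • β = B(β,γ) • γ, and p = 2 gives B(β,γ) = B(γ,γ)
  have hBe : Bf D β γ = Bf D γ γ := by rw [hp2e] at hp1; omega
  exfalso
  apply hne
  have : Bf D γ γ • β = Bf D γ γ • γ := by rw [hx, hBe]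
  funext j
  have := congrFun this j
  simp only [Pi.smul_apply, smul_eq_mul] at this
  have hne0 : Bf D γ γ ≠ 0 := ne_of_gt hγγ
  exact mul_left_cancel₀ hne0 this

end KLR
namespace KLR

variable {I : Type} [Fintype I] [DecidableEq I] (D : CartanDatum I)

def htZ (v : I → ℤ) : ℤ := ∑ i, v i

lemma htZ_pos (v : I → ℤ) (hv : IsPosRoot D v) : 0 < htZ v := by
  have hne := isRoot_ne_zero D v hv.1
  have : ∃ j, v j ≠ 0 := by
    by_contra h
    push_neg at h
    exact hne (funext fun j => h j)
  obtain ⟨j, hj⟩ := this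
  have hj' : 0 < v j := lt_of_le_of_ne (hv.2 j) (Ne.symm hj)
  exact Finset.sum_pos' (fun i _ => hv.2 i) ⟨j, Finset.mem_univ j, hj'⟩

lemma htZ_list_sum (G : List (I → ℤ)) : htZ G.sum = (G.map htZ).sum := by
  induction G with
  | nil => simp [htZ]
  | cons a G ih =>
    simp only [List.sum_cons, List.map_cons]
    rw [← ih, htZ, htZ]
    simp [Finset.sum_add_distrib, htZ]

lemma sum_pos_roots_ne_zero (G : List (I → ℤ)) (hne : G ≠ [])
    (hall : ∀ γ ∈ G, IsPosRoot D γ) : G.sum ≠ 0 := by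
  intro h0
  have h1 : htZ G.sum = 0 := by rw [h0]; simp [htZ]
  rw [htZ_list_sum] at h1
  obtain ⟨a, G', rfl⟩ := List.exists_cons_of_ne_nil hne
  have ha := htZ_pos D a (hall a (by simp))
  have hrest : 0 ≤ (G'.map htZ).sum := by
    apply List.sum_nonneg
    intro x hx
    obtain ⟨γ, hγ, rfl⟩ := List.mem_map.mp hx
    exact le_of_lt (htZ_pos D γ (hall γ (by simp [hγ])))
  simp only [List.map_cons, List.sum_cons] at h1
  omega

lemma sum_coord_nonneg (G : List (I → ℤ)) (hall : ∀ γ ∈ G, IsPosRoot D γ) (j : I) :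
    0 ≤ G.sum j := by
  induction G with
  | nil => simp
  | cons a G ih =>
    simp only [List.sum_cons, Pi.add_apply]
    have h1 := (hall a (by simp)).2 j
    have h2 := ih (fun γ hγ => hall γ (by simp [hγ]))
    omega

lemma Bf_list_sum_right (u : I → ℤ) (G : List (I → ℤ)) :
    Bf D u G.sum = (G.map (Bf D u)).sum := by
  induction G with
  | nil => simp [Bf]
  | cons a G ih => simp only [List.sum_cons, List.map_cons, List.sum_cons, Bf_add_right, ih]

lemma list_sum_nonpos (L : List ℤ) (h : ∀ x ∈ L, x ≤ 0) : L.sum ≤ 0 := by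
  induction L with
  | nil => simp
  | cons a L ih =>
    simp only [List.sum_cons]
    have := h a (by simp)
    have := ih (fun x hx => h x (by simp [hx]))
    omega

lemma isConvexOrder_flip (le : (I → ℤ) → (I → ℤ) → Prop) (h : IsConvexOrder D le) :
    IsConvexOrder D (fun a b => le b a) := by
  constructor
  · exact fun v hv => h.refl v hv
  · exact fun u v w hu hv hw h1 h2 => h.trans w v u hw hv hu h2 h1
  · exact fun u v hu hv h1 h2 => h.antisymm u v hu hv h2 h1
  · exact fun u v hu hv => h.total v u hv hu
  · intro γ β hγ hβ hγβ hle
    have hβγ : IsPosRoot D (β + γ) := by rwa [add_comm]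
    have hc := h.convex β γ hβ hγ hβγ hle
    rw [add_comm β γ] at hc
    exact ⟨hc.2, hc.1⟩

/-- The bracketing lemma: a positive root which is the sum of a nonempty list of
positive roots is `⪯` some member and `⪰` some member. -/
lemma sum_bracket (le : (I → ℤ) → (I → ℤ) → Prop) (hconv : IsConvexOrder D le) :
    ∀ (N : ℕ) (G : List (I → ℤ)), G.length ≤ N → G ≠ [] →
    (∀ γ ∈ G, IsPosRoot D γ) → IsPosRoot D G.sum →
    (∃ γ ∈ G, le G.sum γ) ∧ (∃ γ ∈ G, le γ G.sum) := by
  intro N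
  induction N with
  | zero => intro G hlen hne _ _; interval_cases h : G.length <;> simp_all
  | succ N ih =>
    intro G hlen hne hall hβ
    set β := G.sum with hβdef
    have hβne : β ≠ 0 := sum_pos_roots_ne_zero D G hne hall
    -- find a summand pairing positively with β
    have hex : ∃ γ ∈ G, 0 < Bf D β γ := by
      by_contra hno
      push_neg at hno
      have h1 : Bf D β β ≤ 0 := by
        rw [hβdef, Bf_list_sum_right]
        apply list_sum_nonpos
        intro x hx
        obtain ⟨γ, hγ, rfl⟩ := List.mem_map.mp hx
        exact hno γ hγ
      exact absurd h1 (not_le.mpr (Bf_pos D β hβne))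
    obtain ⟨γt, hmem, hBpos⟩ := hex
    by_cases hG1 : G.length = 1
    · obtain ⟨x, rfl⟩ := List.length_eq_one_iff.mp hG1
      have hx : γt = x := by simpa using hmem
      have hβx : β = x := by simp [hβdef]
      refine ⟨⟨x, by simp, ?_⟩, ⟨x, by simp, ?_⟩⟩ <;>
        · rw [hβx] at hβ ⊢; exact hconv.refl x hβ
    · -- at least two summands
      set G' := G.erase γt with hG'
      have hperm : G.Perm (γt :: G') := List.perm_cons_erase hmem
      have hsum : β = γt + G'.sum := by
        rw [hβdef, hperm.sum_eq, List.sum_cons]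
      have hlenG' : G'.length = G.length - 1 := by
        rw [hG', List.length_erase_of_mem hmem]
      have hG2 : 2 ≤ G.length := by
        cases G with
        | nil => simp at hne
        | cons a G0 => cases G0 with
          | nil => simp at hG1
          | cons b G1 => simp only [List.length_cons]; omega
      have hne' : G' ≠ [] := by
        intro h
        rw [h] at hlenG'
        simp at hlenG'
        omega
      have hall' : ∀ γ ∈ G', IsPosRoot D γ := fun γ hγ => hall γ (List.mem_of_mem_erase hγ)
      set δ := G'.sum with hδdef
      have hδne : δ ≠ 0 := sum_pos_roots_ne_zero D G' hne' hall'
      have hβγt : β ≠ γt := by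
        intro h
        apply hδne
        have : γt + δ = γt + 0 := by rw [← hsum, ← h, add_zero]
        exact add_left_cancel this
      have hδroot : IsRoot D δ := by
        have := isRoot_sub D β γt hβ.1 (hall γt hmem).1 hβγt hBpos
        have heq : β - γt = δ := by rw [hsum]; abel
        rwa [heq] at this
      have hδpos : IsPosRoot D δ := ⟨hδroot, fun j => sum_coord_nonneg D G' hall' j⟩
      have hIH := ih G' (by omega) hne' hall' hδpos
      obtain ⟨⟨γ', hγ'm, hδγ'⟩, ⟨γ'', hγ''m, hγ''δ⟩⟩ := hIH
      have hγtpos := hall γt hmem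
      have hγ'pos := hall' γ' hγ'm
      have hγ''pos := hall' γ'' hγ''m
      have hβpos' : IsPosRoot D (γt + δ) := by rw [← hsum]; exact hβ
      rcases hconv.total γt δ hγtpos hδpos with hle | hle
      · have hc := hconv.convex γt δ hγtpos hδpos hβpos' hle
        rw [← hsum] at hc
        refine ⟨⟨γ', List.mem_of_mem_erase hγ'm, ?_⟩, ⟨γt, hmem, hc.1⟩⟩
        exact hconv.trans β δ γ' hβ hδpos hγ'pos hc.2 hδγ'
      · have hβpos'' : IsPosRoot D (δ + γt) := by rwa [add_comm]
        have hc := hconv.convex δ γt hδpos hγtpos hβpos'' hle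
        rw [add_comm δ γt, ← hsum] at hc
        refine ⟨⟨γt, hmem, hc.2⟩, ⟨γ'', List.mem_of_mem_erase hγ''m, ?_⟩⟩
        exact hconv.trans γ'' δ β hγ''pos hδpos hβ hγ''δ hc.1

end KLR
namespace KLR

variable {I : Type} [Fintype I] [DecidableEq I] (D : CartanDatum I)

lemma bilexLt_cons {V : Type} (le : V → V → Prop) (a : V) (A B : List V)
    (h : BilexLt le A B) : BilexLt le (a :: A) (a :: B) := by
  obtain ⟨⟨t, h1, h2, htake, hlt⟩, ⟨u, k1, k2, ktake, klt⟩⟩ := h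
  constructor
  · refine ⟨t + 1, ?_, ?_, ?_, ?_⟩
    · simp only [List.length_cons]; omega
    · simp only [List.length_cons]; omega
    · simp only [List.take_succ_cons, htake]
    · simpa using hlt
  · rw [List.reverse_cons, List.reverse_cons]
    refine ⟨u, ?_, ?_, ?_, ?_⟩
    · have k1' : u < A.length := by simpa using k1
      simp only [List.length_append, List.length_reverse, List.length_singleton]
      omega
    · have k2' : u < B.length := by simpa using k2
      simp only [List.length_append, List.length_reverse, List.length_singleton]
      omega
    · rw [List.take_append_of_le_length (le_of_lt k1),
        List.take_append_of_le_length (le_of_lt k2), ktake]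
    · have e1 : (A.reverse ++ [a]).get ⟨u, by have := k1; simp at this ⊢; omega⟩
          = A.reverse.get ⟨u, k1⟩ := by
        simp [List.getElem_append_left k1]
      have e2 : (B.reverse ++ [a]).get ⟨u, by have := k2; simp at this ⊢; omega⟩
          = B.reverse.get ⟨u, k2⟩ := by
        simp [List.getElem_append_left k2]
      simp only [List.get_eq_getElem] at e1 e2 ⊢
      rw [e1, e2]
      exact klt

lemma bilexLt_reverse {V : Type} (le : V → V → Prop) (A B : List V)
    (h : BilexLt (fun a b => le b a) A.reverse B.reverse) : BilexLt le A B := by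
  obtain ⟨h1, h2⟩ := h
  rw [List.reverse_reverse, List.reverse_reverse] at h2
  exact ⟨h2, h1⟩

/-- Stripping an equal maximal part. -/
lemma strip_step (le : (I → ℤ) → (I → ℤ) → Prop) (hconv : IsConvexOrder D le)
    (μ0 la0 : I → ℤ) (mu' lam' : List (I → ℤ))
    (G : List (I → ℤ)) (P' : List (List (I → ℤ)))
    (hmupos : ∀ v ∈ μ0 :: mu', IsPosRoot D v)
    (hlampos : ∀ v ∈ la0 :: lam', IsPosRoot D v)
    (hsorted : List.Pairwise (fun a b => le b a) (la0 :: lam'))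
    (hsum : G.sum = μ0)
    (hjoin : (G ++ P'.flatten).Perm (la0 :: lam'))
    (heq : μ0 = la0) :
    P'.flatten.Perm lam' := by
  have hμpos : IsPosRoot D μ0 := hmupos μ0 (by simp)
  have hlapos : IsPosRoot D la0 := hlampos la0 (by simp)
  have hGpos : ∀ γ ∈ G, IsPosRoot D γ := by
    intro γ hγ
    exact hlampos γ (hjoin.mem_iff.mp (by simp [hγ]))
  have hGne : G ≠ [] := by
    intro h
    rw [h] at hsum
    exact isRoot_ne_zero D μ0 hμpos.1 (by simp at hsum; exact hsum.symm)
  have hbr := sum_bracket D le hconv G.length G le_rfl hGne hGpos (by rw [hsum]; exact hμpos)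
  obtain ⟨⟨γ, hγG, hμγ⟩, -⟩ := hbr
  rw [hsum] at hμγ
  have hγlam : γ ∈ la0 :: lam' := hjoin.mem_iff.mp (by simp [hγG])
  have hγpos : IsPosRoot D γ := hlampos γ hγlam
  have hγla0 : le γ la0 := by
    rcases List.mem_cons.mp hγlam with h | h
    · rw [h]; exact hconv.refl la0 hlapos
    · exact (List.pairwise_cons.mp hsorted).1 γ h
  have hγμ : γ = μ0 := by
    apply hconv.antisymm γ μ0 hγpos hμpos _ hμγ
    rw [heq]; exact hγla0
  -- the rest of G sums to zero, hence is empty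
  have hpermG : G.Perm (γ :: G.erase γ) := List.perm_cons_erase hγG
  have herasesum : (G.erase γ).sum = 0 := by
    have h1 : γ + (G.erase γ).sum = μ0 := by rw [← List.sum_cons, ← hpermG.sum_eq, hsum]
    have h2 : γ + (G.erase γ).sum = γ := by rw [h1]; exact hγμ.symm
    exact add_eq_left.mp h2
  have herase : G.erase γ = [] := by
    by_contra h
    exact sum_pos_roots_ne_zero D (G.erase γ) h
      (fun v hv => hGpos v (List.mem_of_mem_erase hv)) herasesum
  have hGsingle : G.Perm [γ] := by rw [herase] at hpermG; exact hpermG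
  have h2 : (γ :: P'.flatten).Perm (la0 :: lam') := by
    refine List.Perm.trans ?_ hjoin
    exact (hGsingle.append_right P'.flatten).symm
  rw [hγμ, heq] at h2
  exact h2.cons_inv

lemma bilex_main :
    ∀ (N : ℕ) (le : (I → ℤ) → (I → ℤ) → Prop), IsConvexOrder D le →
    ∀ (mu lam : List (I → ℤ)) (P : List (List (I → ℤ))),
      mu.length ≤ N →
      (∀ v ∈ mu, IsPosRoot D v) → (∀ v ∈ lam, IsPosRoot D v) →
      List.Pairwise (fun a b => le b a) lam →
      P.map List.sum = mu → P.flatten.Perm lam →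
      mu = lam ∨ BilexLt le mu lam := by
  intro N
  induction N with
  | zero =>
    intro le hconv mu lam P hlen hmp hlp hs hPs hj
    have hmu : mu = [] := List.length_eq_zero_iff.mp (Nat.le_zero.mp hlen)
    subst hmu
    have hP : P = [] := List.map_eq_nil_iff.mp hPs
    subst hP
    left
    simp only [List.flatten_nil] at hj
    exact (List.perm_nil.mp hj.symm).symm
  | succ N ih =>
    intro le hconv mu lam P hlen hmp hlp hs hPs hj
    cases mu with
    | nil =>
      have hP : P = [] := List.map_eq_nil_iff.mp hPs
      subst hP
      left
      simp only [List.flatten_nil] at hj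
      exact (List.perm_nil.mp hj.symm).symm
    | cons μ0 mu' =>
      cases P with
      | nil => simp at hPs
      | cons G P' =>
        simp only [List.map_cons, List.cons.injEq] at hPs
        obtain ⟨hG, hP'⟩ := hPs
        have hjoin : (G ++ P'.flatten).Perm lam := by simpa using hj
        have hμpos : IsPosRoot D μ0 := hmp μ0 (by simp)
        cases lam with
        | nil =>
          exfalso
          have h0 : G ++ P'.flatten = [] := List.perm_nil.mp hjoin
          have hGnil : G = [] := (List.append_eq_nil_iff.mp h0).1
          rw [hGnil] at hG
          exact isRoot_ne_zero D μ0 hμpos.1 (by simp at hG; exact hG.symm)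
        | cons la0 lam' =>
          have hlapos : IsPosRoot D la0 := hlp la0 (by simp)
          by_cases hhead : μ0 = la0
          · -- strip the first parts
            have hstrip := strip_step D le hconv μ0 la0 mu' lam' G P' hmp hlp hs hG hjoin hhead
            have hres := ih le hconv mu' lam' P'
              (by simp only [List.length_cons] at hlen; omega)
              (fun v hv => hmp v (by simp [hv]))
              (fun v hv => hlp v (by simp [hv]))
              (List.pairwise_cons.mp hs).2 hP' hstrip
            rcases hres with heq | hlt
            · left; rw [hhead, heq]
            · right
              rw [hhead]
              exact bilexLt_cons le la0 mu' lam' hlt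
          · -- first parts differ:  μ0 ≺ la0
            have hmula : le μ0 la0 := by
              have hGpos : ∀ γ ∈ G, IsPosRoot D γ := by
                intro γ hγ
                exact hlp γ (hjoin.mem_iff.mp (by simp [hγ]))
              have hGne : G ≠ [] := by
                intro h
                rw [h] at hG
                exact isRoot_ne_zero D μ0 hμpos.1 (by simp at hG; exact hG.symm)
              obtain ⟨⟨γ, hγG, hμγ⟩, -⟩ := sum_bracket D le hconv G.length G le_rfl hGne hGpos
                (by rw [hG]; exact hμpos)
              rw [hG] at hμγ
              have hγlam : γ ∈ la0 :: lam' := hjoin.mem_iff.mp (by simp [hγG])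
              have hγpos : IsPosRoot D γ := hlp γ hγlam
              rcases List.mem_cons.mp hγlam with h | h
              · rw [← h]; exact hμγ
              · exact hconv.trans μ0 γ la0 hμpos hγpos hlapos hμγ
                  ((List.pairwise_cons.mp hs).1 γ h)
            -- set up reversed data
            set mu : List (I → ℤ) := μ0 :: mu' with hmu
            set lam : List (I → ℤ) := la0 :: lam' with hlam
            obtain ⟨a, ms, hmur⟩ : ∃ a ms, mu.reverse = a :: ms :=
              List.exists_cons_of_ne_nil (by simp [hmu])
            obtain ⟨b, ls, hlamr⟩ : ∃ b ls, lam.reverse = b :: ls :=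
              List.exists_cons_of_ne_nil (by simp [hlam])
            set le' : (I → ℤ) → (I → ℤ) → Prop := fun x y => le y x with hle'
            have hconv' : IsConvexOrder D le' := isConvexOrder_flip D le hconv
            set Pr : List (List (I → ℤ)) := (G :: P').reverse with hPr
            obtain ⟨G1, Ps, hPrc⟩ : ∃ G1 Ps, Pr = G1 :: Ps :=
              List.exists_cons_of_ne_nil (by simp [hPr])
            have hPs_r : Pr.map List.sum = a :: ms := by
              rw [hPr, List.map_reverse]
              have : (List.map List.sum (G :: P')) = mu := by
                simp only [List.map_cons, hG, hP', hmu]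
            
              rw [this, hmur]
            have hj_r : Pr.flatten.Perm (b :: ls) := by
              have h1 : Pr.flatten.Perm ((G :: P').flatten) :=
                (List.reverse_perm (G :: P')).flatten
              refine h1.trans ?_
              refine List.Perm.trans (by simpa using hj) ?_
              rw [← hlamr]
              exact (List.reverse_perm lam).symm
            have hms_pos : ∀ v ∈ a :: ms, IsPosRoot D v := by
              intro v hv
              apply hmp
              rw [← List.mem_reverse, hmur]
              exact hv
            have hls_pos : ∀ v ∈ b :: ls, IsPosRoot D v := by
              intro v hv
              apply hlp
              rw [← List.mem_reverse, hlamr]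
              exact hv
            have hls_sorted : List.Pairwise (fun x y => le' y x) (b :: ls) := by
              rw [← hlamr]
              rw [List.pairwise_reverse]
              exact hs
            -- compare the last parts: b ⪯ a always
            have hba : le b a := by
              rw [hPrc] at hPs_r hj_r
              simp only [List.map_cons, List.cons.injEq] at hPs_r
              obtain ⟨hG1, hPs'⟩ := hPs_r
              have hjoin1 : (G1 ++ Ps.flatten).Perm (b :: ls) := by simpa using hj_r
              have hapos : IsPosRoot D a := hms_pos a (by simp)
              have hbpos : IsPosRoot D b := hls_pos b (by simp)
              have hG1pos : ∀ γ ∈ G1, IsPosRoot D γ := by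
                intro γ hγ
                exact hls_pos γ (hjoin1.mem_iff.mp (by simp [hγ]))
              have hG1ne : G1 ≠ [] := by
                intro h
                rw [h] at hG1
                exact isRoot_ne_zero D a hapos.1 (by simp at hG1; exact hG1.symm)
              obtain ⟨-, ⟨γ, hγG, hγa⟩⟩ := sum_bracket D le hconv G1.length G1 le_rfl hG1ne
                hG1pos (by rw [hG1]; exact hapos)
              rw [hG1] at hγa
              have hγlam : γ ∈ b :: ls := hjoin1.mem_iff.mp (by simp [hγG])
              have hγpos : IsPosRoot D γ := hls_pos γ hγlam
              rcases List.mem_cons.mp hγlam with h | h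
              · rw [← h]; exact hγa
              · have hbγ : le b γ := (List.pairwise_cons.mp hls_sorted).1 γ h
                exact hconv.trans b γ a hbpos hγpos hapos hbγ hγa
            by_cases hlast : a = b
            · -- strip the last parts (via the reversed data)
              rw [hPrc] at hPs_r hj_r
              simp only [List.map_cons, List.cons.injEq] at hPs_r
              obtain ⟨hG1, hPs'⟩ := hPs_r
              have hjoin1 : (G1 ++ Ps.flatten).Perm (b :: ls) := by simpa using hj_r
              have hstrip := strip_step D le' hconv' a b ms ls G1 Ps hms_pos hls_pos
                hls_sorted hG1 hjoin1 hlast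
              have hres := ih le' hconv' ms ls Ps
                (by
                  have : mu.reverse.length = mu.length := List.length_reverse (as := mu)
                  rw [hmur] at this
                  simp only [List.length_cons] at this hlen
                  omega)
                (fun v hv => hms_pos v (by simp [hv]))
                (fun v hv => hls_pos v (by simp [hv]))
                (List.pairwise_cons.mp hls_sorted).2 hPs' hstrip
              have hres2 : mu.reverse = lam.reverse ∨ BilexLt le' mu.reverse lam.reverse := by
                rw [hmur, hlamr, ← hlast]
                rcases hres with heq | hlt
                · left; rw [heq]
                · right; exact bilexLt_cons le' a ms ls hlt
              rcases hres2 with heq | hlt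
              · left
                have := congrArg List.reverse heq
                simpa using this
              · right
                exact bilexLt_reverse le mu lam hlt
            · -- both ends strictly differ: direct witnesses
              right
              constructor
              · refine ⟨0, by simp [hmu], by simp [hlam], by simp, ?_⟩
                exact ⟨hmula, hhead⟩
              · rw [hmur, hlamr]
                refine ⟨0, by simp, by simp, by simp, ?_⟩
                exact ⟨hba, hlast⟩

end KLR
namespace KLR

open scoped Classical

variable {I : Type} [Fintype I] [DecidableEq I]
variable (k : Type) [CommRing k] (D : CartanDatum I) (α : I → ℕ)

lemma E_mul_E (f g : Fin (ht α) → I) :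
    E k D α f * E k D α g = if f = g then E k D α f else 0 := by
  rw [E, E, ← map_mul]
  rw [RingQuot.mkAlgHom_rel k (Rel.ee f g)]
  rw [apply_ite (RingQuot.mkAlgHom k (Rel k D α (ht α))), map_zero]

lemma T_mul_E (r : Fin (ht α)) (h : r.val + 1 < ht α) (g : Fin (ht α) → I) :
    T k D α r * E k D α g
      = E k D α (g ∘ Equiv.swap r (nxt r h)) * T k D α r := by
  rw [T, E, E, ← map_mul, ← map_mul]
  exact RingQuot.mkAlgHom_rel k (Rel.te r h g)

lemma tauWord_mul_E (L : List (Fin (ht α))) (hL : ValidWord L) (g : Fin (ht α) → I) :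
    tauWord k D α L * E k D α g
      = E k D α (g ∘ ⇑(wordPerm L)⁻¹) * tauWord k D α L := by
  induction L with
  | nil =>
    have h1 : tauWord k D α ([] : List (Fin (ht α))) = 1 := by simp [tauWord]
    have h2 : wordPerm ([] : List (Fin (ht α))) = 1 := by simp [wordPerm]
    rw [h1, h2, one_mul, mul_one]
    congr 1
  | cons r L ih =>
    have hv : r.val + 1 < ht α := hL r (by simp)
    have hL' : ValidWord L := fun s hs => hL s (by simp [hs])
    have hT : tauWord k D α (r :: L) = T k D α r * tauWord k D α L := by
      simp [tauWord]
    have hperm : wordPerm (r :: L) = Equiv.swap r (nxt r hv) * wordPerm L := by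
      simp [wordPerm, hv]
    have hfun : (g ∘ ⇑(wordPerm L)⁻¹) ∘ ⇑(Equiv.swap r (nxt r hv))
        = g ∘ ⇑(wordPerm (r :: L))⁻¹ := by
      rw [hperm]
      funext x
      simp [Function.comp, mul_inv_rev, Equiv.Perm.mul_apply]
    rw [hT, mul_assoc, ih hL', ← mul_assoc, T_mul_E k D α r hv, mul_assoc, hfun]

lemma product_zero (lam mu : List (I → ℤ)) (L : List (Fin (ht α))) (hLv : ValidWord L)
    (hnone : ∀ g : Fin (ht α) → I,
      ¬(blockMem mu g ∧ blockMem lam (g ∘ ⇑(wordPerm L)⁻¹))) :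
    oneKP k D α lam * tauWord k D α L * oneKP k D α mu = 0 := by
  rw [oneKP, oneKP, Finset.sum_mul, Finset.sum_mul]
  apply Finset.sum_eq_zero
  intro f _
  rw [Finset.mul_sum]
  apply Finset.sum_eq_zero
  intro g _
  by_cases hf : blockMem lam f
  swap
  · rw [if_neg hf, zero_mul, zero_mul]
  by_cases hg : blockMem mu g
  swap
  · rw [if_neg hg, mul_zero]
  rw [if_pos hf, if_pos hg]
  rw [mul_assoc, tauWord_mul_E k D α L hLv g, ← mul_assoc, E_mul_E]
  have hne : f ≠ g ∘ ⇑(wordPerm L)⁻¹ := by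
    intro h
    exact hnone g ⟨hg, by rw [← h]; exact hf⟩
  rw [if_neg hne, zero_mul]

end KLR
namespace KLR

open scoped Classical

variable {I : Type} [Fintype I] [DecidableEq I]

/-- `p` lies in the `t`-th block of the Kostant partition `L`. -/
def InB (L : List (I → ℤ)) (t p : ℕ) : Prop :=
  offset L t ≤ p ∧ p < offset L (t + 1)

lemma sameBlock_iff (L : List (I → ℤ)) (r s : ℕ) :
    sameBlock L r s ↔ ∃ t, InB L t r ∧ InB L t s := by
  unfold sameBlock InB
  tauto

lemma offset_zero (L : List (I → ℤ)) : offset L 0 = 0 := by simp [offset]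

lemma offset_succ (L : List (I → ℤ)) (t : ℕ) (h : t < L.length) :
    offset L (t + 1) = offset L t + htroot (L.get ⟨t, h⟩) := by
  rw [offset, offset, List.take_succ]
  rw [List.map_append, List.sum_append]
  congr 1
  have : L[t]? = some (L.get ⟨t, h⟩) := by
    rw [List.getElem?_eq_getElem h]
    simp
  rw [this]
  simp

lemma offset_stab (L : List (I → ℤ)) (t : ℕ) (h : L.length ≤ t) :
    offset L t = offset L L.length := by
  rw [offset, offset, List.take_of_length_le h, List.take_of_length_le le_rfl]

lemma offset_mono (L : List (I → ℤ)) : Monotone (offset L) := by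
  apply monotone_nat_of_le_succ
  intro t
  by_cases h : t < L.length
  · rw [offset_succ L t h]; omega
  · rw [offset_stab L t (by omega), offset_stab L (t + 1) (by omega)]

lemma InB_lt_length (L : List (I → ℤ)) (t p : ℕ) (h : InB L t p) : t < L.length := by
  by_contra hc
  push_neg at hc
  obtain ⟨h1, h2⟩ := h
  rw [offset_stab L t hc] at h1
  rw [offset_stab L (t + 1) (by omega)] at h2
  omega

lemma InB_unique (L : List (I → ℤ)) (t t' p : ℕ) (h : InB L t p) (h' : InB L t' p) :
    t = t' := by
  by_contra hne
  rcases Nat.lt_or_ge t t' with hlt | hge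
  · have := offset_mono L (show t + 1 ≤ t' by omega)
    obtain ⟨h1, h2⟩ := h; obtain ⟨h1', h2'⟩ := h'
    omega
  · have hlt : t' < t := by omega
    have := offset_mono L (show t' + 1 ≤ t by omega)
    obtain ⟨h1, h2⟩ := h; obtain ⟨h1', h2'⟩ := h'
    omega

lemma htroot_pos (D : CartanDatum I) (v : I → ℤ) (hv : IsPosRoot D v) : 0 < htroot v := by
  have := htZ_pos D v hv
  rw [htroot]
  rw [htZ] at this
  omega

lemma offset_total (D : CartanDatum I) (α : I → ℕ) (L : List (I → ℤ))
    (hall : ∀ v ∈ L, IsPosRoot D v) (hsum : L.sum = fun i => (α i : ℤ)) :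
    offset L L.length = ht α := by
  have key : ∀ (M : List (I → ℤ)), (∀ v ∈ M, 0 ≤ htZ v) →
      ((M.map htroot).sum : ℤ) = htZ M.sum := by
    intro M
    induction M with
    | nil => simp [htZ]
    | cons a M ih =>
      intro hM
      simp only [List.map_cons, List.sum_cons, Nat.cast_add]
      rw [ih (fun v hv => hM v (by simp [hv]))]
      have h1 : (htroot a : ℤ) = htZ a := by
        rw [htroot, htZ]
        exact Int.toNat_of_nonneg (by rw [← htZ]; exact hM a (by simp))
      have h2 : htZ (a + M.sum) = htZ a + htZ M.sum := by
        rw [htZ, htZ, htZ]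
        simp [Finset.sum_add_distrib]
      rw [h1, h2]
  have h2 : ((L.map htroot).sum : ℤ) = htZ L.sum :=
    key L (fun v hv => le_of_lt (htZ_pos D v (hall v hv)))
  rw [hsum] at h2
  have h3 : htZ (fun i => (α i : ℤ)) = (ht α : ℤ) := by
    rw [htZ, ht]
    push_cast
    rfl
  rw [h3] at h2
  have h4 : offset L L.length = (L.map htroot).sum := by
    rw [offset, List.take_of_length_le le_rfl]
  omega

lemma InB_cover (D : CartanDatum I) (α : I → ℕ) (L : List (I → ℤ))
    (hall : ∀ v ∈ L, IsPosRoot D v) (hsum : L.sum = fun i => (α i : ℤ))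
    (p : ℕ) (hp : p < ht α) : ∃ t, InB L t p := by
  have htot := offset_total D α L hall hsum
  have hex : ∃ t, p < offset L (t + 1) := by
    refine ⟨L.length, ?_⟩
    rw [offset_stab L (L.length + 1) (by omega), htot]
    exact hp
  set t0 := Nat.find hex with ht0
  have h1 : p < offset L (t0 + 1) := Nat.find_spec hex
  refine ⟨t0, ?_, h1⟩
  cases h : t0 with
  | zero => rw [offset_zero]; omega
  | succ s =>
    have h2 : ¬ p < offset L (s + 1) := Nat.find_min hex (by omega)
    omega

lemma blockMem_count (L : List (I → ℤ)) {n : ℕ} (f : Fin n → I) (hf : blockMem L f)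
    (t : ℕ) (h : t < L.length) (i : I) :
    ((Finset.univ.filter fun r : Fin n => InB L t r.val ∧ f r = i).card : ℤ)
      = L.get ⟨t, h⟩ i := by
  rw [← hf t h i]
  congr 2
  ext r
  simp [InB, and_assoc]

/-- The main counting construction. -/
lemma content_eq (D : CartanDatum I) (α : I → ℕ) (lam mu : List (I → ℤ))
    (hlamp : ∀ v ∈ lam, IsPosRoot D v) (hlams : lam.sum = fun i => (α i : ℤ))
    (hmup : ∀ v ∈ mu, IsPosRoot D v) (hmus : mu.sum = fun i => (α i : ℤ))
    (w : Equiv.Perm (Fin (ht α))) (g : Fin (ht α) → I)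
    (hg : blockMem mu g) (hf : blockMem lam (g ∘ ⇑w⁻¹))
    (hcon : ∀ (r : Fin (ht α)) (h : r.val + 1 < ht α),
      sameBlock lam r.val (r.val + 1) → sameBlock mu ((w⁻¹ r).val) ((w⁻¹ (nxt r h)).val)) :
    ∃ σ : ℕ → ℕ, (∀ t, t < lam.length → σ t < mu.length) ∧
      ∀ s (hs : s < mu.length), mu.get ⟨s, hs⟩ =
        ∑ t ∈ (Finset.range lam.length).filter (fun t => σ t = s), lam.getD t 0 := by
  have hlamtot := offset_total D α lam hlamp hlams
  have hmutot := offset_total D α mu hmup hmus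
  -- each lam-block is mapped by w⁻¹ into a single mu-block
  have hblocks : ∀ t, ∃ s, t < lam.length →
      (s < mu.length ∧ ∀ p : Fin (ht α), InB lam t p.val → InB mu s ((w⁻¹ p).val)) := by
    intro t
    by_cases htl : t < lam.length
    swap
    · exact ⟨0, fun h => absurd h htl⟩
    have hoff1 : offset lam t < offset lam (t + 1) := by
      rw [offset_succ lam t htl]
      have := htroot_pos D _ (hlamp _ (List.get_mem lam ⟨t, htl⟩))
      omega
    have hofftop : offset lam (t + 1) ≤ ht α := by
      rw [← hlamtot]
      exact offset_mono lam (by omega)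
    set p0 : ℕ := offset lam t with hp0
    have hp0lt : p0 < ht α := by omega
    obtain ⟨s, hs⟩ := InB_cover D α mu hmup hmus ((w⁻¹ ⟨p0, hp0lt⟩).val) (w⁻¹ ⟨p0, hp0lt⟩).isLt
    refine ⟨s, fun _ => ⟨InB_lt_length mu s _ hs, ?_⟩⟩
    -- induct along the block
    have key : ∀ m (hq : p0 + m < offset lam (t + 1)),
        InB mu s ((w⁻¹ ⟨p0 + m, by omega⟩).val) := by
      intro m
      induction m with
      | zero => intro _; exact hs
      | succ m ih =>
        intro hq
        have hq' : p0 + m < offset lam (t + 1) := by omega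
        have hbase := ih hq'
        have hlt1 : p0 + m + 1 < ht α := by omega
        have hsb : sameBlock lam (p0 + m) (p0 + m + 1) := by
          rw [sameBlock_iff]
          exact ⟨t, ⟨by omega, by omega⟩, ⟨by omega, by omega⟩⟩
        have hstep := hcon ⟨p0 + m, by omega⟩ hlt1 hsb
        rw [sameBlock_iff] at hstep
        obtain ⟨s', h1', h2'⟩ := hstep
        have hss : s' = s := InB_unique mu s' s _ h1' hbase
        rw [hss] at h2'
        exact h2'
    intro p hp
    have hple : p0 ≤ p.val := hp.1
    have hkey := key (p.val - p0) (by have := hp.2; omega)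
    have hpe : (⟨p0 + (p.val - p0), by omega⟩ : Fin (ht α)) = p := Fin.ext (by simp; omega)
    rwa [hpe] at hkey
  choose σ hσ using hblocks
  refine ⟨σ, fun t ht => (hσ t ht).1, ?_⟩
  intro s hs
  funext i
  -- count occurrences of i in the s-th mu-block
  set A : Finset (Fin (ht α)) :=
    Finset.univ.filter (fun q => InB mu s q.val ∧ g q = i) with hA
  set A' : ℕ → Finset (Fin (ht α)) :=
    fun t => Finset.univ.filter (fun q => InB lam t ((w q).val) ∧ g q = i) with hA'
  set At : ℕ → Finset (Fin (ht α)) :=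
    fun t => Finset.univ.filter (fun r => InB lam t r.val ∧ g (w⁻¹ r) = i) with hAt
  have hcard : ∀ t, (A' t).card = (At t).card := by
    intro t
    apply Finset.card_bij (fun q _ => w q)
    · intro q hq
      simp only [hA', Finset.mem_filter, Finset.mem_univ, true_and] at hq
      simp only [hAt, Finset.mem_filter, Finset.mem_univ, true_and]
      exact ⟨hq.1, by rw [Equiv.Perm.inv_def, Equiv.symm_apply_apply]; exact hq.2⟩
    · intro q1 _ q2 _ h
      exact w.injective h
    · intro r hr
      simp only [hAt, Finset.mem_filter, Finset.mem_univ, true_and] at hr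
      refine ⟨w⁻¹ r, ?_, by simp⟩
      simp only [hA', Finset.mem_filter, Finset.mem_univ, true_and]
      rw [Equiv.Perm.inv_def, Equiv.apply_symm_apply]
      exact hr
  have hpart : A = ((Finset.range lam.length).filter (fun t => σ t = s)).biUnion A' := by
    ext q
    simp only [hA, hA', Finset.mem_filter, Finset.mem_univ, true_and, Finset.mem_biUnion,
      Finset.mem_range]
    constructor
    · rintro ⟨hq1, hq2⟩
      obtain ⟨t, htB⟩ := InB_cover D α lam hlamp hlams ((w q).val) (w q).isLt
      have htlen : t < lam.length := InB_lt_length lam t _ htB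
      have := (hσ t htlen).2 (w q) htB
      rw [Equiv.Perm.inv_def, Equiv.symm_apply_apply] at this
      have hts : σ t = s := InB_unique mu (σ t) s q.val this hq1
      exact ⟨t, ⟨htlen, hts⟩, htB, hq2⟩
    · rintro ⟨t, ⟨htlen, hts⟩, htB, hq2⟩
      have := (hσ t htlen).2 (w q) htB
      rw [Equiv.Perm.inv_def, Equiv.symm_apply_apply, hts] at this
      exact ⟨this, hq2⟩
  have hdisj : ∀ t1 ∈ (Finset.range lam.length).filter (fun t => σ t = s),
      ∀ t2 ∈ (Finset.range lam.length).filter (fun t => σ t = s), t1 ≠ t2 →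
      Disjoint (A' t1) (A' t2) := by
    intro t1 _ t2 _ hne
    rw [Finset.disjoint_left]
    intro q hq1 hq2
    simp only [hA', Finset.mem_filter, Finset.mem_univ, true_and] at hq1 hq2
    exact hne (InB_unique lam t1 t2 _ hq1.1 hq2.1)
  have hAcard : (A.card : ℤ) = mu.get ⟨s, hs⟩ i := blockMem_count mu g hg s hs i
  have hsum2 : (A.card : ℤ) =
      ∑ t ∈ (Finset.range lam.length).filter (fun t => σ t = s), ((At t).card : ℤ) := by
    rw [hpart, Finset.card_biUnion hdisj]
    push_cast
    exact Finset.sum_congr rfl fun t _ => by rw [hcard t]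
  rw [Finset.sum_apply]
  rw [← hAcard, hsum2]
  apply Finset.sum_congr rfl
  intro t htmem
  have htlen : t < lam.length := Finset.mem_range.mp (Finset.mem_filter.mp htmem).1
  have h1 : ((At t).card : ℤ) = lam.get ⟨t, htlen⟩ i := by
    have := blockMem_count lam (g ∘ ⇑w⁻¹) hf t htlen i
    rw [← this]
    congr 2
  have h2 : lam.getD t 0 i = lam.get ⟨t, htlen⟩ i := by
    rw [List.getD_eq_getElem lam 0 htlen]
    simp
  rw [h1, h2]

end KLR
namespace KLR

variable {I : Type} [Fintype I] [DecidableEq I]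

lemma list_filter_map_sum {M : Type} [AddCommMonoid M] (l : ℕ) (σ : ℕ → ℕ) (s : ℕ)
    (f : ℕ → M) :
    (((List.range l).filter (fun t => σ t = s)).map f).sum
      = ∑ t ∈ (Finset.range l).filter (fun t => σ t = s), f t := by
  induction l with
  | zero => simp
  | succ l ih =>
    rw [List.range_succ, List.filter_append, List.map_append, List.sum_append, ih]
    rw [Finset.range_add_one, Finset.filter_insert]
    by_cases hp : σ l = s
    · rw [if_pos hp, Finset.sum_insert (by simp)]
      simp only [List.filter_cons, List.filter_nil]
      rw [if_pos (by simpa using hp)]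
      simp [add_comm]
    · rw [if_neg hp]
      simp only [List.filter_cons, List.filter_nil]
      rw [if_neg (by simpa using hp)]
      simp

lemma map_getD_range {V : Type} (L : List V) (d : V) :
    (List.range L.length).map (fun t => L.getD t d) = L := by
  apply List.ext_getElem
  · simp
  · intro n h1 h2
    simp [List.getD_eq_getElem L d, List.getElem?_eq_getElem h2]

lemma join_filters_perm (l m : ℕ) (σ : ℕ → ℕ) (hσ : ∀ t, t < l → σ t < m) :
    (((List.range m).map
        (fun s => (List.range l).filter (fun t => σ t = s))).flatten).Perm
      (List.range l) := by
  apply (List.perm_ext_iff_of_nodup ?_ List.nodup_range).mpr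
  · intro a
    rw [List.mem_flatten]
    constructor
    · rintro ⟨gr, hgr, hagr⟩
      obtain ⟨s, -, rfl⟩ := List.mem_map.mp hgr
      exact List.mem_of_mem_filter hagr
    · intro ha
      have hal : a < l := List.mem_range.mp ha
      refine ⟨(List.range l).filter (fun t => σ t = σ a), ?_, ?_⟩
      · exact List.mem_map.mpr ⟨σ a, List.mem_range.mpr (hσ a hal), rfl⟩
      · exact List.mem_filter.mpr ⟨ha, by simp⟩
  · rw [List.nodup_flatten]
    constructor
    · intro x hx
      obtain ⟨s, _, rfl⟩ := List.mem_map.mp hx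
      exact List.Nodup.filter _ List.nodup_range
    · rw [List.pairwise_map]
      apply List.Pairwise.imp ?_ List.pairwise_lt_range
      intro s s' hss
      intro a ha ha'
      have h1 : σ a = s := by simpa using (List.mem_filter.mp ha).2
      have h2 : σ a = s' := by simpa using (List.mem_filter.mp ha').2
      omega

end KLR
open KLR

/-!
STATEMENT 7: let `λ, μ ∈ KP(α)` with `λ ≱ μ` in the bilexicographic order.  If `w ∈ S_n`
(with fixed reduced expression `L`) satisfies `1_λ τ_w 1_μ ≠ 0` in `H_{α,k}`, then there is
`1 ≤ r < n` with `r ∼_λ r+1` but `w⁻¹(r) ≁_μ w⁻¹(r+1)`. -/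
theorem stmt_7 {I : Type} [Fintype I] [DecidableEq I] (D : CartanDatum I)
    (k : Type) [Field k]
    (le : (I → ℤ) → (I → ℤ) → Prop) (hconv : IsConvexOrder D le)
    (α : I → ℕ) (lam mu : List (I → ℤ))
    (hlam : IsKP D le α lam) (hmu : IsKP D le α mu)
    (hnotge : ¬ (mu = lam ∨ BilexLt le mu lam))
    (w : Equiv.Perm (Fin (ht α))) (L : List (Fin (ht α)))
    (hL : IsReducedWordFor L w)
    (hne : oneKP k D α lam * tauWord k D α L * oneKP k D α mu ≠ 0) :
    ∃ (r : Fin (ht α)) (h : r.val + 1 < ht α),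
      sameBlock lam r.val (r.val + 1) ∧
        ¬ sameBlock mu ((w⁻¹ r).val) ((w⁻¹ (nxt r h)).val) := by
  by_contra hgoal
  push_neg at hgoal
  obtain ⟨hLv, hLw, -⟩ := hL
  -- extract a word g compatible with both block structures
  have hex : ∃ g : Fin (ht α) → I, blockMem mu g ∧ blockMem lam (g ∘ ⇑w⁻¹) := by
    by_contra hno
    push_neg at hno
    apply hne
    apply product_zero k D α lam mu L hLv
    intro g hg2
    rw [hLw] at hg2
    exact hno g hg2.1 hg2.2
  obtain ⟨g, hg, hf⟩ := hex
  obtain ⟨σ, hσm, hcontent⟩ :=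
    content_eq D α lam mu hlam.1 hlam.2.2 hmu.1 hmu.2.2 w g hg hf hgoal
  -- package the fibers of σ into a partition of lam refining mu
  set P : List (List (I → ℤ)) := (List.range mu.length).map
    (fun s => ((List.range lam.length).filter (fun t => σ t = s)).map
      (fun t => lam.getD t 0)) with hP
  have hPsum : P.map List.sum = mu := by
    apply List.ext_getElem
    · simp [hP]
    · intro s h1 h2
      have hs : s < mu.length := h2
      simp only [hP, List.getElem_map, List.getElem_range]
      rw [list_filter_map_sum]
      have := hcontent s hs
      rw [← this]
      simp [List.get_eq_getElem]
  have hPjoin : P.flatten.Perm lam := by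
    have h1 : P = ((List.range mu.length).map
        (fun s => (List.range lam.length).filter (fun t => σ t = s))).map
        (List.map (fun t => lam.getD t 0)) := by
      rw [hP, List.map_map]
      rfl
    have hJ := join_filters_perm lam.length mu.length σ hσm
    have h2 := hJ.map (fun t => lam.getD t 0)
    rw [map_getD_range lam 0] at h2
    have h3 : P.flatten = (((List.range mu.length).map
        (fun s => (List.range lam.length).filter (fun t => σ t = s))).flatten).map
        (fun t => lam.getD t 0) := by
      rw [h1]
      exact List.map_flatten.symm
    rw [h3]
    exact h2
  exact hnotge
    (bilex_main D mu.length le hconv mu lam P le_rfl hmu.1 hlam.1 hlam.2.1 hPsum hPjoin)
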